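/- Let m = |r|, n = |s| for nonzero integers r, s with r + s = 0, and let ε_i = sgn(r) for 1 ≤ i ≤ m and ε_i = sgn(s) for m+1 ≤ i ≤ m+n. Then every element of S^{(ε)}_{NC}(m,n) := S^{(ε)}_{m+n} ∩ S_{NC}(m,n) is a product of disjoint transpositions each pairing one element of {1,...,m} with one element of {m+1,...,m+n}, and the number of such elements is exactly n = |r|. -/

import Mathlib

noncomputable def transLength {N : ℕ} (π : Equiv.Perm (Fin N)) : ℕ :=
  sInf {k | ∃ l : List (Equiv.Perm (Fin N)),
    (∀ τ ∈ l, τ.IsSwap) ∧ l.prod = π ∧ l.length = k}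

def gammaMN (m n : ℕ) : Equiv.Perm (Fin (m + n)) :=
  finSumFinEquiv.permCongr ((finRotate m).sumCongr (finRotate n))

def Connected {m n : ℕ} (π : Equiv.Perm (Fin (m + n))) : Prop :=
  ∀ x y : Fin (m + n),
    ∃ g ∈ Subgroup.closure ({π, gammaMN m n} : Set (Equiv.Perm (Fin (m + n)))), g x = y


open Equiv Equiv.Perm

section Aux
variable {α : Type*} [DecidableEq α] [Fintype α]

lemma prod_eq_self_of_fixed (l : List (Perm α)) (x : α) (h : ∀ τ ∈ l, τ x = x) :
    l.prod x = x := by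
  induction l with
  | nil => simp
  | cons τ t ih =>
      simp only [List.prod_cons, Perm.mul_apply]
      rw [ih fun σ hσ => h σ (List.mem_cons_of_mem _ hσ), h τ (List.mem_cons_self)]

lemma prod_eq_of_pairwise_disjoint (l : List (Perm α)) (hl : l.Pairwise Perm.Disjoint) :
    ∀ τ ∈ l, ∀ x : α, τ x ≠ x → l.prod x = τ x := by
  induction l with
  | nil => simp
  | cons σ t ih =>
      intro τ hτ x hx
      obtain ⟨hd, hp⟩ := List.pairwise_cons.mp hl
      rcases List.mem_cons.mp hτ with rfl | ht
      · have : ∀ ρ ∈ t, ρ x = x := by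
          intro ρ hρ
          rcases (hd ρ hρ) x with h1 | h1
          · exact absurd h1 hx
          · exact h1
        simp only [List.prod_cons, Perm.mul_apply, prod_eq_self_of_fixed t x this]
      · have hτx : τ (τ x) ≠ τ x := fun h => hx (τ.injective h)
        have hσfix : σ (τ x) = τ x := by
          rcases (hd τ ht) (τ x) with h1 | h1
          · exact h1
          · exact absurd h1 hτx
        simp only [List.prod_cons, Perm.mul_apply, ih hp τ ht x hx, hσfix]

/-- union of supports -/
def usup (l : List (Perm α)) : Finset α := (l.map Perm.support).foldr (· ⊔ ·) ⊥

lemma support_prod_subset (l : List (Perm α)) : l.prod.support ⊆ usup l :=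
  Equiv.Perm.support_prod_le l

lemma card_usup_le (l : List (Perm α)) (h : ∀ τ ∈ l, IsSwap τ) :
    (usup l).card ≤ 2 * l.length := by
  induction l with
  | nil => simp [usup]
  | cons τ t ih =>
      have hτ : τ.support.card = 2 := by
        obtain ⟨a, b, hab, rfl⟩ := h τ (List.mem_cons_self)
        exact card_support_swap hab
      have : usup (τ :: t) = τ.support ⊔ usup t := rfl
      calc (usup (τ :: t)).card ≤ τ.support.card + (usup t).card := by
            rw [this]; exact Finset.card_union_le _ _
        _ ≤ 2 + 2 * t.length := by
            have := ih fun σ hσ => h σ (List.mem_cons_of_mem _ hσ)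
            omega
        _ = 2 * (τ :: t).length := by simp [List.length_cons]; ring

lemma mem_usup_of_mem_support {l : List (Perm α)} {τ : Perm α} (hτ : τ ∈ l) {x : α}
    (hx : x ∈ τ.support) : x ∈ usup l := by
  induction l with
  | nil => simp at hτ
  | cons σ t ih =>
      rcases List.mem_cons.mp hτ with rfl | ht
      · exact Finset.mem_union_left _ hx
      · exact Finset.mem_union_right _ (ih ht)

lemma pairwise_or_lt (l : List (Perm α)) (h : ∀ τ ∈ l, IsSwap τ) :
    l.Pairwise Perm.Disjoint ∨ (usup l).card < 2 * l.length := by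
  induction l with
  | nil => left; exact List.Pairwise.nil
  | cons τ t ih =>
      have hτ2 : τ.support.card = 2 := by
        obtain ⟨a, b, hab, rfl⟩ := h τ (List.mem_cons_self)
        exact card_support_swap hab
      have ht : ∀ σ ∈ t, IsSwap σ := fun σ hσ => h σ (List.mem_cons_of_mem _ hσ)
      have hcard : (usup t).card ≤ 2 * t.length := card_usup_le t ht
      by_cases hd : ∀ σ ∈ t, Perm.Disjoint τ σ
      · rcases ih ht with hp | hlt
        · left; exact List.pairwise_cons.mpr ⟨hd, hp⟩
        · right
          have : (usup (τ :: t)).card ≤ τ.support.card + (usup t).card :=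
            Finset.card_union_le _ _
          simp only [List.length_cons]
          omega
      · right
        push_neg at hd
        obtain ⟨σ, hσt, hσ⟩ := hd
        rw [Perm.disjoint_iff_disjoint_support, Finset.disjoint_left] at hσ
        push_neg at hσ
        obtain ⟨x, hx1, hx2⟩ := hσ
        have hxu : x ∈ usup t := mem_usup_of_mem_support hσt hx2
        have hsub : usup (τ :: t) ⊆ τ.support \ {x} ∪ usup t := by
          intro y hy
          rcases Finset.mem_union.mp hy with hy | hy
          · by_cases hxy : y = x
            · subst hxy; exact Finset.mem_union_right _ hxu
            · exact Finset.mem_union_left _ (Finset.mem_sdiff.mpr ⟨hy, by simp [hxy]⟩)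
          · exact Finset.mem_union_right _ hy
        have h1 : (τ.support \ {x}).card ≤ 1 := by
          have := Finset.card_sdiff_of_subset (by simpa using hx1 : {x} ⊆ τ.support)
          simp only [Finset.card_singleton] at this
          omega
        have h2 : (usup (τ :: t)).card ≤ (τ.support \ {x}).card + (usup t).card := by
          calc (usup (τ :: t)).card ≤ (τ.support \ {x} ∪ usup t).card := Finset.card_le_card hsub
            _ ≤ _ := Finset.card_union_le _ _
        simp only [List.length_cons]
        omega


lemma exists_of_mem_usup {l : List (Perm α)} {x : α} (hx : x ∈ usup l) :
    ∃ τ ∈ l, x ∈ τ.support := by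
  induction l with
  | nil => simp [usup] at hx
  | cons σ t ih =>
      rcases Finset.mem_union.mp hx with h | h
      · exact ⟨σ, List.mem_cons_self, h⟩
      · obtain ⟨τ, h1, h2⟩ := ih h
        exact ⟨τ, List.mem_cons_of_mem _ h1, h2⟩


lemma support_eq_univ_of_nofix {π : Perm α} (hfix : ∀ x, π x ≠ x) :
    π.support = Finset.univ :=
  Finset.eq_univ_iff_forall.mpr fun x => Perm.mem_support.mpr (hfix x)

lemma key_involution {N : ℕ} (π : Perm (Fin N)) (l : List (Perm (Fin N)))
    (hsw : ∀ τ ∈ l, IsSwap τ) (hprod : l.prod = π) (hlen : N = 2 * l.length)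
    (hfix : ∀ x, π x ≠ x) : ∀ x, π (π x) = x := by
  have hsupp : π.support = Finset.univ := support_eq_univ_of_nofix hfix
  have hN : (usup l).card ≥ N := by
    calc N = π.support.card := by rw [hsupp]; simp
      _ ≤ (usup l).card := Finset.card_le_card (by rw [← hprod]; exact support_prod_subset l)
  have hpd : l.Pairwise Perm.Disjoint := by
    rcases pairwise_or_lt l hsw with h | h
    · exact h
    · omega
  intro x
  obtain ⟨τ, hτl, hτx⟩ := exists_of_mem_usup
    (support_prod_subset l (by rw [hprod, hsupp]; exact Finset.mem_univ x))
  rw [Perm.mem_support] at hτx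
  obtain ⟨a, b, hab, rfl⟩ := hsw τ hτl
  have h1 : π x = Equiv.swap a b x := by
    rw [← hprod]; exact prod_eq_of_pairwise_disjoint l hpd _ hτl x hτx
  have h2 : Equiv.swap a b (Equiv.swap a b x) = x := Equiv.swap_apply_self _ _ _
  have h3 : Equiv.swap a b (Equiv.swap a b x) ≠ Equiv.swap a b x := by
    rw [h2]; exact fun h => hτx h.symm
  have h4 : π (Equiv.swap a b x) = Equiv.swap a b (Equiv.swap a b x) := by
    rw [← hprod]; exact prod_eq_of_pairwise_disjoint l hpd _ hτl _ h3
  rw [h1, h4, h2]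

lemma transLength_le {N : ℕ} (π : Perm (Fin N)) (l : List (Perm (Fin N)))
    (hsw : ∀ τ ∈ l, IsSwap τ) (hprod : l.prod = π) : transLength π ≤ l.length :=
  Nat.sInf_le ⟨l, hsw, hprod, rfl⟩

lemma transLength_spec {N : ℕ} (π : Perm (Fin N)) :
    ∃ l : List (Perm (Fin N)), (∀ τ ∈ l, τ.IsSwap) ∧ l.prod = π ∧
      l.length = transLength π := by
  have hne : {k | ∃ l : List (Equiv.Perm (Fin N)),
      (∀ τ ∈ l, τ.IsSwap) ∧ l.prod = π ∧ l.length = k}.Nonempty := by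
    obtain ⟨l, h1, h2⟩ := (Equiv.Perm.truncSwapFactors π).out
    exact ⟨l.length, l, h2, h1, rfl⟩
  exact Nat.sInf_mem hne

lemma transLength_ge {N : ℕ} (π : Perm (Fin N)) (hfix : ∀ x, π x ≠ x) :
    N ≤ 2 * transLength π := by
  obtain ⟨l, hsw, hprod, hlen⟩ := transLength_spec π
  have h1 : π.support = Finset.univ := support_eq_univ_of_nofix hfix
  calc N = π.support.card := by rw [h1]; simp
    _ ≤ (usup l).card := Finset.card_le_card (by rw [← hprod]; exact support_prod_subset l)
    _ ≤ 2 * l.length := card_usup_le l hsw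
    _ = 2 * transLength π := by rw [hlen]

lemma involution_of_transLength {N : ℕ} (π : Perm (Fin N)) (hfix : ∀ x, π x ≠ x)
    (hlen : N = 2 * transLength π) : ∀ x, π (π x) = x := by
  obtain ⟨l, hsw, hprod, hl⟩ := transLength_spec π
  exact key_involution π l hsw hprod (by omega) hfix
end Aux


open Fin.NatCast Fin.CommRing

section Main
variable {k : ℕ}

private abbrev E (k : ℕ) : Fin (k+1) ⊕ Fin (k+1) ≃ Fin ((k+1) + (k+1)) := finSumFinEquiv

def swapPairFun (c : Fin (k+1)) : Fin (k+1) ⊕ Fin (k+1) → Fin (k+1) ⊕ Fin (k+1) :=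
  Sum.elim (fun i => .inr (c - i)) (fun j => .inl (c - j))

lemma swapPairFun_invol (c : Fin (k+1)) : Function.Involutive (swapPairFun c) := by
  rintro (i | j) <;> simp [swapPairFun, sub_sub_cancel]

def piC (c : Fin (k+1)) : Perm (Fin ((k+1) + (k+1))) :=
  (E k).permCongr (swapPairFun_invol c).toPerm

@[simp] lemma piC_left (c i : Fin (k+1)) :
    piC c (E k (.inl i)) = E k (.inr (c - i)) := by
  simp [piC, Equiv.permCongr_apply, Function.Involutive.coe_toPerm, swapPairFun]

@[simp] lemma piC_right (c j : Fin (k+1)) :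
    piC c (E k (.inr j)) = E k (.inl (c - j)) := by
  simp only [piC, Equiv.permCongr_apply, Equiv.symm_apply_apply,
    Function.Involutive.coe_toPerm, swapPairFun, Sum.elim_inr]

@[simp] lemma gamma_left (i : Fin (k+1)) :
    gammaMN (k+1) (k+1) (E k (.inl i)) = E k (.inl (i + 1)) := by
  simp only [gammaMN, Equiv.permCongr_apply, Equiv.symm_apply_apply, Equiv.sumCongr_apply,
    Sum.map_inl, finRotate_succ_apply]

@[simp] lemma gamma_right (j : Fin (k+1)) :
    gammaMN (k+1) (k+1) (E k (.inr j)) = E k (.inr (j + 1)) := by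
  simp only [gammaMN, Equiv.permCongr_apply, Equiv.symm_apply_apply, Equiv.sumCongr_apply,
    Sum.map_inr, finRotate_succ_apply]

@[simp] lemma val_E_left (i : Fin (k+1)) : ((E k (.inl i) : Fin ((k+1)+(k+1))) : ℕ) = (i : ℕ) := by
  rw [finSumFinEquiv_apply_left]; rfl

@[simp] lemma val_E_right (j : Fin (k+1)) : ((E k (.inr j) : Fin ((k+1)+(k+1))) : ℕ) = (k+1) + (j : ℕ) := by
  rw [finSumFinEquiv_apply_right]; rfl

lemma piC_invol (c : Fin (k+1)) (x : Fin ((k+1)+(k+1))) : piC c (piC c x) = x := by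
  obtain ⟨y, rfl⟩ := (E k).surjective x
  rcases y with i | j <;>
    simp only [piC_left, piC_right, sub_sub_cancel]

lemma gamma_mul_piC (c : Fin (k+1)) :
    gammaMN (k+1) (k+1) * piC c = piC (c + 1) := by
  ext x : 1
  obtain ⟨y, rfl⟩ := (E k).surjective x
  rcases y with i | j <;>
    simp only [Perm.mul_apply, piC_left, piC_right, gamma_left, gamma_right] <;>
    congr 1 <;> congr 1 <;> ring


lemma gamma_pow_left (t : ℕ) (i : Fin (k+1)) :
    ((gammaMN (k+1) (k+1)) ^ t) (E k (.inl i)) = E k (.inl (i + (t : Fin (k+1)))) := by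
  induction t with
  | zero => simp
  | succ t ih =>
      rw [pow_succ', Perm.mul_apply, ih, gamma_left]
      congr 2
      push_cast
      ring

lemma E_ne (i j : Fin (k+1)) : E k (.inl i) ≠ E k (.inr j) := by
  intro h
  exact absurd ((E k).injective h) (by simp)

lemma piC_connected (c : Fin (k+1)) : Connected (piC c) := by
  set γ := gammaMN (k+1) (k+1) with hγ
  set H := Subgroup.closure ({piC c, γ} : Set (Perm (Fin ((k+1)+(k+1))))) with hH
  have hγH : γ ∈ H := Subgroup.subset_closure (by simp)
  have hπH : piC c ∈ H := Subgroup.subset_closure (by simp)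
  have reach : ∀ x : Fin ((k+1)+(k+1)), ∃ g ∈ H, g (E k (.inl 0)) = x := by
    intro x
    obtain ⟨y, rfl⟩ := (E k).surjective x
    rcases y with i | j
    · refine ⟨γ ^ (i : ℕ), pow_mem hγH _, ?_⟩
      rw [gamma_pow_left]
      congr 2
      simp [Fin.cast_val_eq_self]
    · refine ⟨piC c * γ ^ ((c - j : Fin (k+1)) : ℕ), mul_mem hπH (pow_mem hγH _), ?_⟩
      rw [Perm.mul_apply, gamma_pow_left]
      rw [Fin.cast_val_eq_self, zero_add, piC_left, sub_sub_cancel]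
  intro x y
  obtain ⟨gx, hgx, hgxe⟩ := reach x
  obtain ⟨gy, hgy, hgye⟩ := reach y
  refine ⟨gy * gx⁻¹, mul_mem hgy (inv_mem hgx), ?_⟩
  rw [Perm.mul_apply, ← hgxe, (Perm.eq_inv_iff_eq.mpr rfl).symm, hgye]

def swapList (c : Fin (k+1)) : List (Perm (Fin ((k+1)+(k+1)))) :=
  List.ofFn (fun i : Fin (k+1) => Equiv.swap (E k (.inl i)) (E k (.inr (c - i))))

lemma swapList_swaps (c : Fin (k+1)) : ∀ τ ∈ swapList c, IsSwap τ := by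
  intro τ hτ
  obtain ⟨i, rfl⟩ := List.mem_ofFn.mp hτ
  exact ⟨_, _, E_ne _ _, rfl⟩

lemma swapList_pairwise (c : Fin (k+1)) : (swapList c).Pairwise Perm.Disjoint := by
  rw [swapList, List.pairwise_ofFn]
  intro i j hij
  rw [Perm.disjoint_iff_disjoint_support,
    Equiv.Perm.support_swap (E_ne _ _), Equiv.Perm.support_swap (E_ne _ _),
    Finset.disjoint_left]
  intro x hx1 hx2
  have hij' : i ≠ j := ne_of_lt hij
  simp only [Finset.mem_insert, Finset.mem_singleton] at hx1 hx2
  rcases hx1 with rfl | rfl <;> rcases hx2 with h | h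
  · exact hij' (Sum.inl.inj ((E k).injective h))
  · exact E_ne _ _ h
  · exact E_ne _ _ h.symm
  · have := Sum.inr.inj ((E k).injective h)
    exact hij' (by
      have := sub_right_injective (G := Fin (k+1)) (b := c) this
      exact this)

lemma swapList_prod (c : Fin (k+1)) : (swapList c).prod = piC c := by
  ext x : 1
  obtain ⟨y, rfl⟩ := (E k).surjective x
  rcases y with i | j
  · have hmem : Equiv.swap (E k (.inl i)) (E k (.inr (c - i))) ∈ swapList c :=
      List.mem_ofFn.mpr ⟨i, rfl⟩
    rw [prod_eq_of_pairwise_disjoint _ (swapList_pairwise c) _ hmem _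
      (by rw [Equiv.swap_apply_left]; exact (E_ne _ _).symm)]
    rw [Equiv.swap_apply_left, piC_left]
  · have hmem : Equiv.swap (E k (.inl (c - j))) (E k (.inr (c - (c - j)))) ∈ swapList c :=
      List.mem_ofFn.mpr ⟨c - j, rfl⟩
    rw [sub_sub_cancel] at hmem
    rw [prod_eq_of_pairwise_disjoint _ (swapList_pairwise c) _ hmem _
      (by rw [Equiv.swap_apply_right]; exact E_ne _ _)]
    rw [Equiv.swap_apply_right, piC_right]

lemma piC_nofix (c : Fin (k+1)) : ∀ x, piC c x ≠ x := by
  intro x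
  obtain ⟨y, rfl⟩ := (E k).surjective x
  rcases y with i | j
  · rw [piC_left]; exact (E_ne _ _).symm
  · rw [piC_right]; exact E_ne _ _

lemma transLength_piC (c : Fin (k+1)) : transLength (piC c) = k + 1 := by
  have h1 : transLength (piC c) ≤ k + 1 := by
    have := transLength_le (piC c) (swapList c) (swapList_swaps c) (swapList_prod c)
    simpa [swapList] using this
  have h2 := transLength_ge (piC c) (piC_nofix c)
  omega

lemma piC_inv (c : Fin (k+1)) : (piC c)⁻¹ = piC c :=
  inv_eq_of_mul_eq_one_right (Equiv.ext fun x => piC_invol c x)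

lemma exists_inr_of_not_lt {x : Fin ((k+1)+(k+1))} (h : ¬ ((x : ℕ) < k + 1)) :
    ∃ j, x = E k (.inr j) := by
  obtain ⟨y, rfl⟩ := (E k).surjective x
  rcases y with i | j
  · exact absurd (by simpa using i.isLt) h
  · exact ⟨j, rfl⟩

lemma eq_piC_of (π : Perm (Fin ((k+1)+(k+1)))) (hinv : ∀ x, π (π x) = x)
    (hblock : ∀ i : Fin (k+1), ∃ j, π (E k (.inl i)) = E k (.inr j))
    (hconj : ∀ x, π (gammaMN (k+1) (k+1) x) = (gammaMN (k+1) (k+1))⁻¹ (π x)) :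
    ∃ c, π = piC c := by
  obtain ⟨c, hc⟩ := hblock 0
  refine ⟨c, ?_⟩
  have hginv : ∀ j : Fin (k+1),
      (gammaMN (k+1) (k+1))⁻¹ (E k (.inr j)) = E k (.inr (j - 1)) := by
    intro j
    have : E k (.inr j) = gammaMN (k+1) (k+1) (E k (.inr (j - 1))) := by
      rw [gamma_right, sub_add_cancel]
    rw [this, (Perm.eq_inv_iff_eq.mpr rfl).symm]
  have key : ∀ t : ℕ, π (E k (.inl (t : Fin (k+1)))) = E k (.inr (c - (t : Fin (k+1)))) := by
    intro t
    induction t with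
    | zero => simpa using hc
    | succ t ih =>
        have hcast : ((t + 1 : ℕ) : Fin (k+1)) = (t : Fin (k+1)) + 1 := by push_cast; ring
        rw [hcast, ← gamma_left, hconj, ih, hginv, sub_sub]
  have keyl : ∀ i : Fin (k+1), π (E k (.inl i)) = E k (.inr (c - i)) := by
    intro i
    have := key (i : ℕ)
    rwa [Fin.cast_val_eq_self] at this
  have keyr : ∀ j : Fin (k+1), π (E k (.inr j)) = E k (.inl (c - j)) := by
    intro j
    have h1 : π (E k (.inl (c - j))) = E k (.inr j) := by
      rw [keyl, sub_sub_cancel]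
    have := hinv (E k (.inl (c - j)))
    rwa [h1] at this
  ext x : 1
  obtain ⟨y, rfl⟩ := (E k).surjective x
  rcases y with i | j
  · rw [keyl, piC_left]
  · rw [keyr, piC_right]

end Main

theorem annular_pairings_of_signs (r s : ℤ) (hr : r ≠ 0) (hs : s ≠ 0) (hrs : r + s = 0) :
    ∀ m n : ℕ, m = r.natAbs → n = s.natAbs →
    ∀ ε : Fin (m + n) → ℤ,
      (ε = fun i : Fin (m + n) => if (i : ℕ) < m then Int.sign r else Int.sign s) →
    ∀ S : Set (Equiv.Perm (Fin (m + n))),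
      S = {π | (∀ i, ε (π i) = -ε i) ∧ Connected π ∧
            transLength π + transLength (gammaMN m n * π⁻¹) = m + n} →
    (∀ π ∈ S, (∀ i, π (π i) = i) ∧
        (∀ i : Fin (m + n), (i : ℕ) < m ↔ ¬ ((π i : ℕ) < m))) ∧
      S.ncard = r.natAbs := by
  intro m n hm hn ε hε S hS
  have hsr : s = -r := by omega
  have hnm : m = n := by rw [hn, hm, hsr, Int.natAbs_neg]
  subst hnm
  obtain ⟨k, rfl⟩ : ∃ k, m = k + 1 := by
    have : 0 < m := hm ▸ Int.natAbs_pos.mpr hr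
    exact ⟨m - 1, by omega⟩
  subst hε hS
  have hsign : Int.sign s = - Int.sign r := by rw [hsr, Int.sign_neg]
  have hrsign : Int.sign r ≠ 0 := fun h => hr (Int.sign_eq_zero_iff_zero.mp h)
  have hssign : Int.sign s ≠ 0 := fun h => hs (Int.sign_eq_zero_iff_zero.mp h)
  have hγblock : ∀ x : Fin ((k+1)+(k+1)),
      ((gammaMN (k+1) (k+1) x : ℕ) < k+1 ↔ (x : ℕ) < k+1) := by
    intro x
    obtain ⟨y, rfl⟩ := (E k).surjective x
    rcases y with i | j
    · rw [gamma_left, val_E_left, val_E_left]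
      simp [Fin.is_lt, Fin.is_le]
    · rw [gamma_right, val_E_right, val_E_right]
      exact iff_of_false (Nat.not_lt.mpr (Nat.le_add_right _ _)) (Nat.not_lt.mpr (Nat.le_add_right _ _))
  have hblockIff : ∀ π : Perm (Fin ((k+1)+(k+1))),
      (∀ i, (if ((π i : ℕ)) < k+1 then r.sign else s.sign)
        = -(if ((i : ℕ)) < k+1 then r.sign else s.sign)) →
      ∀ x : Fin ((k+1)+(k+1)), ((x : ℕ) < k+1 ↔ ¬ ((π x : ℕ) < k+1)) := by
    intro π hεπ x
    have hyp := hεπ x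
    by_cases h1 : (x : ℕ) < k+1
    · by_cases h2 : ((π x : ℕ)) < k+1
      · exfalso
        rw [if_pos h1, if_pos h2] at hyp
        have : r.sign = 0 := by linarith
        exact hrsign this
      · tauto
    · by_cases h2 : ((π x : ℕ)) < k+1
      · tauto
      · exfalso
        rw [if_neg h1, if_neg h2] at hyp
        have : s.sign = 0 := by linarith
        exact hssign this
  have hforward : ∀ π : Perm (Fin ((k+1)+(k+1))),
      (∀ i, (if ((π i : ℕ)) < k+1 then r.sign else s.sign)
        = -(if ((i : ℕ)) < k+1 then r.sign else s.sign)) →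
      transLength π + transLength (gammaMN (k+1) (k+1) * π⁻¹) = (k+1)+(k+1) →
      ∃ c, π = piC c := by
    intro π hεπ htl
    have hbl := hblockIff π hεπ
    have hfixπ : ∀ x, π x ≠ x := fun x hx => by
      have := hbl x; rw [hx] at this; tauto
    set σ := gammaMN (k+1) (k+1) * π⁻¹ with hσ
    have hσapp : ∀ x, σ x = gammaMN (k+1) (k+1) (π⁻¹ x) := fun x => rfl
    have hblσ : ∀ x : Fin ((k+1)+(k+1)), ((x : ℕ) < k+1 ↔ ¬ ((σ x : ℕ) < k+1)) := by
      intro x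
      have h2 := hbl (π⁻¹ x)
      rw [(Perm.inv_eq_iff_eq.mp rfl).symm] at h2
      have h3 := hγblock (π⁻¹ x)
      rw [hσapp, h3]
      tauto
    have hfixσ : ∀ x, σ x ≠ x := fun x hx => by
      have := hblσ x; rw [hx] at this; tauto
    have g1 := transLength_ge π hfixπ
    have g2 := transLength_ge σ hfixσ
    have e1 : (k+1)+(k+1) = 2 * transLength π := by omega
    have e2 : (k+1)+(k+1) = 2 * transLength σ := by omega
    have hππ := involution_of_transLength π hfixπ e1
    have hσσ := involution_of_transLength σ hfixσ e2
    have hπinv : π⁻¹ = π := inv_eq_of_mul_eq_one_right (by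
      ext x : 1
      simp [Perm.mul_apply, hππ x])
    have hconj : ∀ x, π (gammaMN (k+1) (k+1) x) = (gammaMN (k+1) (k+1))⁻¹ (π x) := by
      intro x
      have h1 : σ (π x) = gammaMN (k+1) (k+1) x := by
        rw [hσapp, hπinv, hππ]
      have h2 := hσσ (π x)
      rw [h1] at h2
      rw [hσapp, hπinv] at h2
      rw [← h2, (Perm.eq_inv_iff_eq.mpr rfl).symm]
    have hblE : ∀ i : Fin (k+1), ∃ j, π (E k (.inl i)) = E k (.inr j) := by
      intro i
      have h := (hbl (E k (.inl i))).mp (by rw [val_E_left]; exact i.is_lt)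
      exact exists_inr_of_not_lt h
    exact eq_piC_of π hππ hblE hconj
  have hεrev : ∀ (c : Fin (k+1)) (i : Fin ((k+1)+(k+1))),
      (if ((piC c i : ℕ)) < k+1 then r.sign else s.sign)
        = -(if ((i : ℕ)) < k+1 then r.sign else s.sign) := by
    intro c x
    obtain ⟨y, rfl⟩ := (E k).surjective x
    rcases y with i | j
    · rw [piC_left, val_E_right, val_E_left, if_neg (by omega), if_pos i.is_lt, hsign]
    · rw [piC_right, val_E_left, val_E_right, if_pos (c - j).is_lt, if_neg (by omega)]
      rw [hsign, neg_neg]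
  have hrev : ∀ c : Fin (k+1),
      transLength (piC c) + transLength (gammaMN (k+1) (k+1) * (piC c)⁻¹)
        = (k+1)+(k+1) := by
    intro c
    rw [piC_inv, gamma_mul_piC, transLength_piC, transLength_piC]
  have hSeq : {π : Perm (Fin ((k+1)+(k+1))) |
      (∀ i, (fun i : Fin ((k+1)+(k+1)) =>
          if (i : ℕ) < k+1 then Int.sign r else Int.sign s) (π i)
        = -(fun i : Fin ((k+1)+(k+1)) =>
          if (i : ℕ) < k+1 then Int.sign r else Int.sign s) i) ∧ Connected π ∧
      transLength π + transLength (gammaMN (k+1) (k+1) * π⁻¹) = (k+1)+(k+1)}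
      = Set.range (piC (k := k)) := by
    ext π
    simp only [Set.mem_setOf_eq, Set.mem_range]
    constructor
    · rintro ⟨h1, _h2, h3⟩
      obtain ⟨c, rfl⟩ := hforward π h1 h3
      exact ⟨c, rfl⟩
    · rintro ⟨c, rfl⟩
      exact ⟨hεrev c, piC_connected c, hrev c⟩
  rw [hSeq]
  constructor
  · rintro π ⟨c, rfl⟩
    refine ⟨piC_invol c, ?_⟩
    intro x
    obtain ⟨y, rfl⟩ := (E k).surjective x
    rcases y with i | j
    · rw [piC_left, val_E_left, val_E_right]
      have := i.is_lt
      omega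
    · rw [piC_right, val_E_right, val_E_left]
      have := (c - j).is_lt
      omega
  · rw [← hm]
    have hinj : Function.Injective (piC (k := k)) := by
      intro c c' h
      have h2 := congrArg (fun p : Perm (Fin ((k+1)+(k+1))) => p (E k (.inl 0))) h
      simp only [piC_left, sub_zero] at h2
      exact Sum.inr.inj ((E k).injective h2)
    calc (Set.range (piC (k := k))).ncard
        = Nat.card (Set.range (piC (k := k))) := (Nat.card_coe_set_eq _).symm
      _ = Nat.card (Fin (k+1)) := Nat.card_range_of_injective hinj
      _ = k + 1 := by simp
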